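/- For every finite simple graph G and every critical independent set S of G, there is a matching from N(S) into S, i.e., an injective function f : N(S) → S such that f(u) is adjacent to u for every u ∈ N(S). -/

import Mathlib

open Finset

namespace CritGraph

variable {V : Type*} [Fintype V] [DecidableEq V]

/-- The neighborhood of a set of vertices `X`:
all vertices having at least one neighbor in `X`. -/
def nbhd (G : SimpleGraph V) [DecidableRel G.Adj] (X : Finset V) : Finset V :=
  univ.filter fun v => ∃ x ∈ X, G.Adj v x

/-- The difference `d(X) = |X| - |N(X)|` of a set of vertices `X`. -/
def diff (G : SimpleGraph V) [DecidableRel G.Adj] (X : Finset V) : ℤ :=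
  (X.card : ℤ) - ((nbhd G X).card : ℤ)

/-- A set of vertices is independent if no two of its vertices are adjacent. -/
def IsIndep (G : SimpleGraph V) (S : Finset V) : Prop :=
  ∀ u ∈ S, ∀ v ∈ S, ¬ G.Adj u v

instance (G : SimpleGraph V) [DecidableRel G.Adj] : DecidablePred (IsIndep G) := fun S =>
  inferInstanceAs (Decidable (∀ u ∈ S, ∀ v ∈ S, ¬ G.Adj u v))

/-- The critical difference `d_c(G) = max {d(X) : X ⊆ V}`. -/
def dC (G : SimpleGraph V) [DecidableRel G.Adj] : ℤ :=
  (univ : Finset V).powerset.sup' (Finset.powerset_nonempty _) (diff G)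

/-- The critical independence difference `id_c(G) = max {d(I) : I independent}`. -/
def idC (G : SimpleGraph V) [DecidableRel G.Adj] : ℤ :=
  ((univ : Finset V).powerset.filter (IsIndep G)).sup'
    ⟨∅, by simp [IsIndep]⟩ (diff G)

/-- `A` is a critical independent set: `A` is independent and
`d(A) = max {d(I) : I independent}`. -/
def IsCritIndep (G : SimpleGraph V) [DecidableRel G.Adj] (A : Finset V) : Prop :=
  IsIndep G A ∧ ∀ I : Finset V, IsIndep G I → diff G I ≤ diff G A

instance (G : SimpleGraph V) [DecidableRel G.Adj] : DecidablePred (IsCritIndep G) := fun A =>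
  inferInstanceAs (Decidable (IsIndep G A ∧ ∀ I : Finset V, IsIndep G I → diff G I ≤ diff G A))

/-- `ker(G)`: the intersection of all critical independent sets of `G`. -/
def kerG (G : SimpleGraph V) [DecidableRel G.Adj] : Finset V :=
  univ.filter fun v => ∀ A : Finset V, IsCritIndep G A → v ∈ A

/-- `G - v`: the induced subgraph of `G` on `V \ {v}`. -/
def deleteVert (G : SimpleGraph V) (v : V) : SimpleGraph {u : V // u ≠ v} :=
  G.comap Subtype.val

instance (G : SimpleGraph V) (v : V) [DecidableRel G.Adj] :
    DecidableRel (deleteVert G v).Adj := fun a b =>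
  inferInstanceAs (Decidable (G.Adj a.val b.val))

/-- `S` is an inclusion-minimal independent set with positive difference. -/
def MinPosIndep (G : SimpleGraph V) [DecidableRel G.Adj] (S : Finset V) : Prop :=
  IsIndep G S ∧ 0 < diff G S ∧ ∀ S' ⊂ S, ¬ (IsIndep G S' ∧ 0 < diff G S')

/-- `S` is a maximum independent set. -/
def IsMaxIndep (G : SimpleGraph V) (S : Finset V) : Prop :=
  IsIndep G S ∧ ∀ I : Finset V, IsIndep G I → I.card ≤ S.card

instance (G : SimpleGraph V) [DecidableRel G.Adj] : DecidablePred (IsMaxIndep G) := fun S =>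
  inferInstanceAs (Decidable (IsIndep G S ∧ ∀ I : Finset V, IsIndep G I → I.card ≤ S.card))

/-- `core(G)`: the intersection of all maximum independent sets of `G`. -/
def coreG (G : SimpleGraph V) [DecidableRel G.Adj] : Finset V :=
  univ.filter fun v => ∀ A : Finset V, IsMaxIndep G A → v ∈ A


/-- For every critical independent set `S` there is a matching from `N(S)` into `S`. -/
theorem matching_from_nbhd_of_critIndep (G : SimpleGraph V) [DecidableRel G.Adj]
    (S : Finset V) (hS : IsCritIndep G S) :
    ∃ f : V → V, Set.InjOn f ↑(nbhd G S) ∧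
      ∀ u ∈ nbhd G S, f u ∈ S ∧ G.Adj u (f u) := by
  classical
  -- Hall condition
  have hall : ∀ T : Finset V, T ⊆ nbhd G S → (T.card : ℤ) ≤ ((S ∩ nbhd G T).card : ℤ) := by
    intro T hT
    set I : Finset V := S \ nbhd G T with hI
    have hIS : I ⊆ S := sdiff_subset
    have hIind : IsIndep G I := fun u hu v hv => hS.1 u (hIS hu) v (hIS hv)
    have hle : diff G I ≤ diff G S := hS.2 I hIind
    have hNI : nbhd G I ⊆ nbhd G S \ T := by
      intro v hv
      simp only [nbhd, mem_filter, mem_univ, true_and] at hv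
      obtain ⟨x, hxI, hadj⟩ := hv
      have hxS : x ∈ S := hIS hxI
      have hxnT : x ∉ nbhd G T := (mem_sdiff.mp hxI).2
      refine mem_sdiff.mpr ⟨?_, ?_⟩
      · simp only [nbhd, mem_filter, mem_univ, true_and]
        exact ⟨x, hxS, hadj⟩
      · intro hvT
        apply hxnT
        simp only [nbhd, mem_filter, mem_univ, true_and]
        exact ⟨v, hvT, hadj.symm⟩
    have hcardNI : ((nbhd G I).card : ℤ) ≤ ((nbhd G S).card : ℤ) - (T.card : ℤ) := by
      have h1 : (nbhd G I).card ≤ (nbhd G S \ T).card := card_le_card hNI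
      have h2 : (nbhd G S \ T).card = (nbhd G S).card - T.card := card_sdiff_of_subset hT
      have h3 : T.card ≤ (nbhd G S).card := card_le_card hT
      omega
    have hcardI : (I.card : ℤ) = (S.card : ℤ) - ((S ∩ nbhd G T).card : ℤ) := by
      have : I.card = S.card - (S ∩ nbhd G T).card := by
        rw [hI, sdiff_eq_sdiff_iff_inter_eq_inter.mpr rfl]
        exact (card_sdiff_add_card_inter S (nbhd G T)) ▸ by
          have := card_sdiff_add_card_inter S (nbhd G T); omega
      have h4 : (S ∩ nbhd G T).card ≤ S.card := card_le_card inter_subset_left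
      omega
    have := hle
    simp only [diff] at this
    omega
  -- apply Hall's theorem
  set t : {u // u ∈ nbhd G S} → Finset V := fun u => S.filter (fun s => G.Adj u.val s) with ht
  have hhall : ∀ A : Finset {u // u ∈ nbhd G S}, A.card ≤ (A.biUnion t).card := by
    intro A
    set T : Finset V := A.image Subtype.val with hT
    have hTcard : T.card = A.card := card_image_of_injective A Subtype.val_injective
    have hTsub : T ⊆ nbhd G S := by
      intro v hv
      obtain ⟨u, _, rfl⟩ := mem_image.mp hv
      exact u.2
    have hbi : A.biUnion t = S ∩ nbhd G T := by
      ext s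
      rw [mem_biUnion]
      simp only [mem_biUnion, ht, mem_filter, mem_inter, nbhd, mem_univ, true_and, hT,
        mem_image]
      constructor
      · rintro ⟨u, huA, hsS, hadj⟩
        exact ⟨hsS, u.val, Finset.mem_image.mpr ⟨u, huA, rfl⟩, hadj.symm⟩
      · rintro ⟨hsS, v, hv, hadj⟩
        obtain ⟨u, huA, rfl⟩ := Finset.mem_image.mp hv
        exact ⟨u, huA, hsS, hadj.symm⟩
    have := hall T hTsub
    rw [hbi]
    omega
  obtain ⟨f, hfinj, hft⟩ := (Finset.all_card_le_biUnion_card_iff_exists_injective t).mp hhall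
  refine ⟨fun u => if h : u ∈ nbhd G S then f ⟨u, h⟩ else u, ?_, ?_⟩
  · intro u hu v hv h
    simp only [Finset.mem_coe] at hu hv
    simp only [dif_pos hu, dif_pos hv] at h
    exact Subtype.ext_iff.mp (hfinj h)
  · intro u hu
    simp only [dif_pos hu]
    have := hft ⟨u, hu⟩
    simp only [ht, mem_filter] at this
    exact this

end CritGraph
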